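/- Let g_1, g_2 be binary morphisms on X = {a,b} with g_1(a) = a^s, g_1(b) = a^{γ_1} b a^{α_1} ⋯ b a^{α_{p-1}} b a^{γ_2}, g_2(a) = a^t, g_2(b) = a^{δ_1} b a^{β_1} ⋯ b a^{β_{q-1}} b a^{δ_2}, where s,t ≥ 1, p,q ≥ 2 and all exponents are nonnegative. Assume p and q are multiplicatively independent, g_1(b) ∉ b*, and ω(g_1) = ω(g_2). Then s = t = 1 and γ_1 = γ_2 = δ_1 = δ_2 = 0. -/

import Mathlib

/-- Words over the binary alphabet: `false` is the letter `a`, `true` is the letter `b`. -/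
abbrev Word := List Bool

/-- The morphism of the free monoid determined by the images `g` of the letters. -/
def applyG (g : Bool → Word) (w : Word) : Word := w.flatMap g

/-- `a^n`. -/
def rep (n : ℕ) : Word := List.replicate n false

/-- `b a^{α 1} b a^{α 2} ⋯ b a^{α (p-1)} b`, a word with `p` occurrences of `b`. -/
def blockWord (p : ℕ) (α : ℕ → ℕ) : Word :=
  ((List.range (p - 1)).flatMap fun i => true :: rep (α (i + 1))) ++ [true]

/-- `w^k`. -/
def wordPow (w : Word) (k : ℕ) : Word := (List.replicate k w).flatten

/-- `u` and `v` are `a`-conjugates. -/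
def AConj (u v : Word) : Prop :=
  ∃ p q r s : ℕ, ∃ w : Word,
    u = rep p ++ w ++ rep q ∧ v = rep r ++ w ++ rep s ∧ p + q = r + s

/-- `w` is the infinite word `ω(g)`: for every `n`, the word obtained from `g^n(b)` by deleting
all occurrences of `a` preceding the first occurrence of `b` is a prefix of `w`. -/
def IsOmega (g : Bool → Word) (w : ℕ → Bool) : Prop :=
  ∀ n k : ℕ, ∀ hk : k < (((applyG g)^[n] [true]).dropWhile (fun x => !x)).length,
    (((applyG g)^[n] [true]).dropWhile (fun x => !x)).get ⟨k, hk⟩ = w k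

/-- `Aw w i` (for `i ≥ 1`): the number of occurrences of `a` in `w` strictly between the
`i`-th and `(i+1)`-th occurrences of `b` in `w`. -/
noncomputable def Aw (w : ℕ → Bool) (i : ℕ) : ℕ :=
  Nat.nth (fun n => w n = true) i - Nat.nth (fun n => w n = true) (i - 1) - 1

namespace St10

/-- gap function -/
def Fg (p s c : ℕ) (α : ℕ → ℕ) : ℕ → ℕ
  | j =>
    if h : 2 ≤ p ∧ p ∣ j ∧ j ≠ 0 then
      have : j / p < j := Nat.div_lt_self (Nat.pos_of_ne_zero h.2.2) h.1
      c + s * Fg p s c α (j / p)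
    else α (j % p)

lemma Fg_dvd {p s c : ℕ} {α : ℕ → ℕ} {j : ℕ} (hp : 2 ≤ p) (hd : p ∣ j) (hj : j ≠ 0) :
    Fg p s c α j = c + s * Fg p s c α (j / p) := by
  rw [Fg]; simp [hp, hd, hj]

lemma Fg_not_dvd {p s c : ℕ} {α : ℕ → ℕ} {j : ℕ} (hd : ¬ p ∣ j) :
    Fg p s c α j = α (j % p) := by
  rw [Fg]
  have : ¬ (2 ≤ p ∧ p ∣ j ∧ j ≠ 0) := by tauto
  simp [this]

def body (F : ℕ → ℕ) (m : ℕ) : Word := (List.range m).flatMap fun j => rep (F (j+1)) ++ [true]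

def TW (F : ℕ → ℕ) (m : ℕ) : Word := true :: body F m

lemma rep_append (a b : ℕ) : rep a ++ rep b = rep (a + b) := by
  simp [rep, ← List.replicate_add]

lemma applyG_append (g : Bool → Word) (u v : Word) :
    applyG g (u ++ v) = applyG g u ++ applyG g v := by
  simp [applyG]

lemma applyG_rep {g : Bool → Word} {s : ℕ} (ha : g false = rep s) (k : ℕ) :
    applyG g (rep k) = rep (s * k) := by
  induction k with
  | zero => simp [applyG, rep]
  | succ n ih =>
    have : rep (n+1) = rep 1 ++ rep n := by rw [rep_append]; ring_nf
    rw [this, applyG_append, ih]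
    have h1 : applyG g (rep 1) = rep s := by simp [applyG, rep, ha]
    rw [h1, rep_append]; ring_nf

lemma body_add (F : ℕ → ℕ) (k m : ℕ) :
    body F (k + m) = body F k ++ (List.range m).flatMap fun j => rep (F (k + j + 1)) ++ [true] := by
  unfold body
  rw [List.range_add, List.flatMap_append, List.flatMap_map]


lemma body_succ (F : ℕ → ℕ) (m : ℕ) :
    body F (m + 1) = body F m ++ (rep (F (m + 1)) ++ [true]) := by
  rw [body_add]
  simp [body, List.range_succ]

lemma TW_succ (F : ℕ → ℕ) (m : ℕ) :
    TW F (m + 1) = TW F m ++ (rep (F (m + 1)) ++ [true]) := by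
  simp [TW, body_succ]


lemma flatMap_congr' {l : List ℕ} {f g : ℕ → Word} (h : ∀ x ∈ l, f x = g x) :
    l.flatMap f = l.flatMap g := by
  induction l with
  | nil => rfl
  | cons a l ih =>
    simp only [List.flatMap_cons]
    rw [h a (by simp), ih fun x hx => h x (by simp [hx])]

/-- appending a run of `α`-blocks to `TW (Fg ...) k` when `p ∣ k`. -/
lemma TW_shift {p s c : ℕ} {α : ℕ → ℕ} (hp : 2 ≤ p) {k m : ℕ} (hk : p ∣ k) (hm : m < p) :
    TW (Fg p s c α) k ++ body α m = TW (Fg p s c α) (k + m) := by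
  rw [TW, TW, body_add]
  have : ∀ j ∈ List.range m, (rep (α (j+1)) ++ [true] : Word)
      = rep (Fg p s c α (k + j + 1)) ++ [true] := by
    intro j hj
    have hjm : j < m := List.mem_range.mp hj
    have h1 : (k + j + 1) % p = j + 1 := by
      obtain ⟨k', rfl⟩ := hk
      rw [show p * k' + j + 1 = p * k' + (j + 1) by omega, Nat.mul_add_mod]
      exact Nat.mod_eq_of_lt (by omega)
    have hnd : ¬ p ∣ (k + j + 1) := by
      intro hdd
      have : p ∣ (j + 1) := by
        have := (Nat.dvd_add_right hk).mp (by rwa [show k + (j+1) = k + j + 1 by omega])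
        exact this
      have := Nat.le_of_dvd (by omega) this
      omega
    rw [Fg_not_dvd hnd, h1]
  rw [show body α m = (List.range m).flatMap fun j => rep (Fg p s c α (k + j + 1)) ++ [true] from by
    rw [body]; exact flatMap_congr' this]
  simp

lemma blockWord_comm (m : ℕ) (f : ℕ → ℕ) :
    ((List.range m).flatMap fun i => true :: rep (f (i + 1))) ++ [true]
      = true :: (List.range m).flatMap fun i => rep (f (i + 1)) ++ [true] := by
  induction m with
  | zero => simp
  | succ n ih =>
    rw [List.range_succ]
    simp only [List.flatMap_append, List.flatMap_cons, List.flatMap_nil, List.append_nil]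
    rw [List.append_assoc, show ((true :: rep (f (n + 1)) : Word) ++ [true])
        = [true] ++ (rep (f (n + 1)) ++ [true]) from by simp,
      ← List.append_assoc, ← List.append_assoc]
    rw [show ((List.range n).flatMap fun i => true :: rep (f (i + 1))) ++ [true]
        = true :: (List.range n).flatMap (fun i => rep (f (i + 1)) ++ [true]) from ih]
    simp

lemma blockWord_eq (p : ℕ) (α : ℕ → ℕ) : blockWord p α = true :: body α (p - 1) := by
  rw [blockWord, body, blockWord_comm]


section Morph
variable {g : Bool → Word} {s γ₁ γ₂ p : ℕ} {α : ℕ → ℕ}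

lemma applyG_cons (g : Bool → Word) (x : Bool) (l : Word) :
    applyG g (x :: l) = g x ++ applyG g l := by simp [applyG]

lemma Cl (hp : 2 ≤ p) (ha : g false = rep s)
    (hb : g true = rep γ₁ ++ blockWord p α ++ rep γ₂) (m : ℕ) :
    blockWord p α ++ rep γ₂ ++ applyG g (body (Fg p s (γ₁ + γ₂) α) m)
      = TW (Fg p s (γ₁ + γ₂) α) (p - 1 + m * p) ++ rep γ₂ := by
  set F := Fg p s (γ₁ + γ₂) α with hF
  induction m with
  | zero =>
    have h0 : applyG g (body F 0) = [] := by simp [body, applyG]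
    rw [h0, blockWord_eq]
    have := TW_shift (s := s) (c := γ₁ + γ₂) (α := α) hp (k := 0) (m := p - 1)
      (Nat.dvd_zero p) (by omega)
    simp only [Nat.zero_add] at this
    rw [show (true :: body α (p - 1) : Word) = TW F 0 ++ body α (p - 1) from by
      simp [TW, body]]
    simp only [List.append_assoc, List.append_nil]
    rw [← List.append_assoc (TW F 0), this]
    simp
    rfl
  | succ n ih =>
    have expand : applyG g (body F (n + 1))
        = applyG g (body F n) ++ (rep (s * F (n + 1)) ++ (rep γ₁ ++ blockWord p α ++ rep γ₂)) := by
      rw [body_succ, applyG_append, applyG_append, applyG_rep ha, applyG_cons, hb]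
      simp [applyG]
    rw [expand]
    have key : blockWord p α ++ rep γ₂ ++ (applyG g (body F n)
        ++ (rep (s * F (n + 1)) ++ (rep γ₁ ++ blockWord p α ++ rep γ₂)))
      = (blockWord p α ++ rep γ₂ ++ applyG g (body F n))
        ++ (rep (s * F (n + 1)) ++ (rep γ₁ ++ blockWord p α ++ rep γ₂)) := by
      simp [List.append_assoc]
    rw [key, ih]
    have hdvd : p ∣ (p - 1 + n * p) + 1 := by
      have : (p - 1 + n * p) + 1 = (n + 1) * p := by
        have : (n + 1) * p = n * p + p := by ring
        omega
      rw [this]; exact Dvd.intro_left _ rfl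
    have hne : (p - 1 + n * p) + 1 ≠ 0 := by omega
    have hdiv : ((p - 1 + n * p) + 1) / p = n + 1 := by
      have h1 : (p - 1 + n * p) + 1 = (n + 1) * p := by
        have : (n + 1) * p = n * p + p := by ring
        omega
      rw [h1, Nat.mul_div_cancel _ (by omega)]
    have hFval : F ((p - 1 + n * p) + 1) = γ₂ + s * F (n + 1) + γ₁ := by
      rw [hF, Fg_dvd hp hdvd hne, hdiv, ← hF]; omega
    have hreps : (rep γ₂ : Word) ++ (rep (s * F (n + 1)) ++ rep γ₁)
        = rep (F ((p - 1 + n * p) + 1)) := by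
      rw [rep_append, rep_append, hFval]; ring_nf
    rw [blockWord_eq]
    -- normalize
    calc TW F (p - 1 + n * p) ++ rep γ₂
          ++ (rep (s * F (n + 1)) ++ (rep γ₁ ++ (true :: body α (p - 1)) ++ rep γ₂))
        = TW F (p - 1 + n * p) ++ (rep γ₂ ++ (rep (s * F (n + 1)) ++ rep γ₁))
          ++ ([true] ++ body α (p - 1)) ++ rep γ₂ := by simp [List.append_assoc]
      _ = (TW F (p - 1 + n * p) ++ (rep (F ((p - 1 + n * p) + 1)) ++ [true]))
          ++ body α (p - 1) ++ rep γ₂ := by rw [hreps]; simp [List.append_assoc]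
      _ = TW F ((p - 1 + n * p) + 1) ++ body α (p - 1) ++ rep γ₂ := by
          rw [← TW_succ]
      _ = TW F (p - 1 + (n + 1) * p) ++ rep γ₂ := by
          rw [TW_shift hp hdvd (by omega)]
          congr 2
          have : (n + 1) * p = n * p + p := by ring
          omega

lemma iter_form (hp : 2 ≤ p) (ha : g false = rep s)
    (hb : g true = rep γ₁ ++ blockWord p α ++ rep γ₂) (n : ℕ) :
    ∃ cc e : ℕ, (applyG g)^[n] [true]
      = rep cc ++ (TW (Fg p s (γ₁ + γ₂) α) (p ^ n - 1) ++ rep e) := by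
  set F := Fg p s (γ₁ + γ₂) α with hF
  induction n with
  | zero =>
    exact ⟨0, 0, by simp [rep, TW, body]⟩
  | succ n ih =>
    obtain ⟨cc, e, ih⟩ := ih
    refine ⟨s * cc + γ₁, γ₂ + s * e, ?_⟩
    rw [Function.iterate_succ_apply', ih, applyG_append, applyG_append,
      applyG_rep ha, applyG_rep ha]
    rw [show TW F (p ^ n - 1) = true :: body F (p ^ n - 1) from rfl, applyG_cons, hb]
    have harith : p - 1 + (p ^ n - 1) * p = p ^ (n + 1) - 1 := by
      have h1 : 1 ≤ p ^ n := Nat.one_le_pow _ _ (by omega)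
      have h2 : (p ^ n - 1) * p = p ^ n * p - p := by
        rw [Nat.sub_mul, one_mul]
      have h3 : p ^ (n + 1) = p ^ n * p := pow_succ p n
      have h4 : p ≤ p ^ n * p := Nat.le_mul_of_pos_left _ (by omega)
      omega
    calc rep (s * cc) ++ (rep γ₁ ++ blockWord p α ++ rep γ₂ ++ applyG g (body F (p ^ n - 1)) ++ rep (s * e))
        = rep (s * cc) ++ rep γ₁ ++ ((blockWord p α ++ rep γ₂ ++ applyG g (body F (p ^ n - 1))) ++ rep (s * e)) := by
          simp [List.append_assoc]
      _ = rep (s * cc + γ₁) ++ ((TW F (p - 1 + (p ^ n - 1) * p) ++ rep γ₂) ++ rep (s * e)) := by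
          rw [rep_append, Cl hp ha hb]
      _ = rep (s * cc + γ₁) ++ (TW F (p ^ (n + 1) - 1) ++ rep (γ₂ + s * e)) := by
          rw [harith]; simp [List.append_assoc, rep_append]


def IsOmega' (g : Bool → Word) (w : ℕ → Bool) : Prop :=
  ∀ n k : ℕ, ∀ hk : k < (((applyG g)^[n] [true]).dropWhile (fun x => !x)).length,
    (((applyG g)^[n] [true]).dropWhile (fun x => !x)).get ⟨k, hk⟩ = w k

lemma dropA_eq (cc : ℕ) (l : Word) :
    (rep cc ++ (true :: l)).dropWhile (fun x => !x) = true :: l := by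
  induction cc with
  | zero => simp [rep, List.dropWhile]
  | succ n ih =>
    rw [show rep (n+1) = false :: rep n from by simp [rep, List.replicate_succ]]
    simpa [List.dropWhile] using ih

lemma agree_w {w : ℕ → Bool} (hp : 2 ≤ p) (ha : g false = rep s)
    (hb : g true = rep γ₁ ++ blockWord p α ++ rep γ₂) (hw : IsOmega' g w)
    (i k : ℕ) (hk : k < (TW (Fg p s (γ₁ + γ₂) α) i).length) :
    (TW (Fg p s (γ₁ + γ₂) α) i).get ⟨k, hk⟩ = w k := by
  set F := Fg p s (γ₁ + γ₂) α with hF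
  obtain ⟨cc, e, hit⟩ := iter_form hp ha hb i
  have hdrop : ((applyG g)^[i] [true]).dropWhile (fun x => !x)
      = TW F (p ^ i - 1) ++ rep e := by
    rw [hit, show TW F (p ^ i - 1) ++ rep e = true :: (body F (p ^ i - 1) ++ rep e) from by
      simp [TW]]
    exact dropA_eq _ _
  have hle : i ≤ p ^ i - 1 := by
    have h1 := Nat.lt_two_pow_self (n := i)
    have h2 : 2 ^ i ≤ p ^ i := Nat.pow_le_pow_left (by omega) i
    omega
  have hd : p ^ i - 1 = i + (p ^ i - 1 - i) := by omega
  have hsplit : TW F (p ^ i - 1) = TW F i ++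
      ((List.range (p ^ i - 1 - i)).flatMap fun j => rep (F (i + j + 1)) ++ [true]) := by
    rw [TW, hd, body_add]
    simp [TW]
  have hk2 : k < (((applyG g)^[i] [true]).dropWhile (fun x => !x)).length := by
    rw [hdrop, hsplit]
    simp only [List.length_append]
    omega
  have := hw i k hk2
  simp only [List.get_eq_getElem, hdrop, hsplit, List.append_assoc] at this
  rw [← this, List.get_eq_getElem, List.getElem_append_left hk]

lemma letters {W : Word} {x : ℕ} {w : ℕ → Bool}
    (hag : ∀ k (hk : k < (W ++ (rep x ++ [true])).length),
      (W ++ (rep x ++ [true])).get ⟨k, hk⟩ = w k) :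
    (∀ u, u < x → w (W.length + u) = false) ∧ w (W.length + x) = true := by
  have hlen : (W ++ (rep x ++ [true])).length = W.length + x + 1 := by
    simp [rep]; omega
  constructor
  · intro u hu
    have hk : W.length + u < (W ++ (rep x ++ [true])).length := by omega
    have := hag (W.length + u) hk
    rw [← this]
    simp only [List.get_eq_getElem]
    rw [List.getElem_append_right (by omega)]
    simp only [Nat.add_sub_cancel_left]
    rw [List.getElem_append_left (by simpa [rep] using hu)]
    simp [rep]
  · have hk : W.length + x < (W ++ (rep x ++ [true])).length := by omega
    have := hag (W.length + x) hk
    rw [← this]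
    simp only [List.get_eq_getElem]
    rw [List.getElem_append_right (by omega)]
    simp only [Nat.add_sub_cancel_left]
    rw [List.getElem_append_right (by simp [rep])]
    simp [rep]

lemma Feq {w : ℕ → Bool} {F G : ℕ → ℕ}
    (hagF : ∀ i k (hk : k < (TW F i).length), (TW F i).get ⟨k, hk⟩ = w k)
    (hagG : ∀ i k (hk : k < (TW G i).length), (TW G i).get ⟨k, hk⟩ = w k) :
    ∀ i, F (i + 1) = G (i + 1) := by
  intro i
  induction i using Nat.strong_induction_on with
  | _ i IH =>
    have hbody : TW G i = TW F i := by
      unfold TW body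
      congr 1
      apply flatMap_congr'
      intro j hj
      rw [IH j (List.mem_range.mp hj)]
    have hF' : ∀ k (hk : k < (TW F i ++ (rep (F (i+1)) ++ [true])).length),
        (TW F i ++ (rep (F (i+1)) ++ [true])).get ⟨k, hk⟩ = w k := by
      rw [← TW_succ]; exact hagF (i+1)
    have hG' : ∀ k (hk : k < (TW F i ++ (rep (G (i+1)) ++ [true])).length),
        (TW F i ++ (rep (G (i+1)) ++ [true])).get ⟨k, hk⟩ = w k := by
      rw [← hbody, ← TW_succ]; exact hagG (i+1)
    obtain ⟨hFa, hFb⟩ := letters hF'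
    obtain ⟨hGa, hGb⟩ := letters hG'
    rcases lt_trichotomy (F (i+1)) (G (i+1)) with h | h | h
    · have := hGa _ h; rw [hFb] at this; exact absurd this (by simp)
    · exact h
    · have := hFa _ h; rw [hGb] at this; exact absurd this (by simp)

end Morph

/-! ### Part B : arithmetic of the gap function -/

def RecA (A : ℕ → ℕ) (p s c : ℕ) (α : ℕ → ℕ) : Prop :=
  ∀ i, 1 ≤ i → (p ∣ i → A i = c + s * A (i / p)) ∧ (¬ p ∣ i → A i = α (i % p))

section Arith

variable {A : ℕ → ℕ} {p s c : ℕ} {α : ℕ → ℕ} {q t d : ℕ} {β : ℕ → ℕ}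

lemma gmul (ht : 1 ≤ t) (e : ℕ) :
    (t - 1) * ∑ i ∈ Finset.range e, t ^ i + 1 = t ^ e := by
  obtain ⟨u, rfl⟩ : ∃ u, t = u + 1 := ⟨t - 1, by omega⟩
  simp only [Nat.add_sub_cancel]
  induction e with
  | zero => simp
  | succ n ih =>
    rw [geom_sum_succ]
    have : u * ((u + 1) * ∑ i ∈ Finset.range n, (u + 1) ^ i + 1) + 1
        = (u + 1) * (u * ∑ i ∈ Finset.range n, (u + 1) ^ i + 1) := by ring
    rw [this, ih, ← pow_succ']

lemma Bchain (hp : 2 ≤ p) (h₁ : RecA A p s c α) {i₀ : ℕ} (h1 : 1 ≤ i₀) (h2 : i₀ < p) (f : ℕ) :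
    A (p ^ f * i₀) = s ^ f * α i₀ + c * ∑ i ∈ Finset.range f, s ^ i := by
  induction f with
  | zero =>
    have hnd : ¬ p ∣ i₀ := fun hdvd => by
      have := Nat.le_of_dvd (by omega) hdvd; omega
    have := (h₁ i₀ h1).2 hnd
    simp [this, Nat.mod_eq_of_lt h2]
  | succ f ih =>
    have hpos : 0 < p ^ f * i₀ := by positivity
    have hpos2 : 0 < p ^ (f + 1) * i₀ := by positivity
    have hrw : p ^ (f + 1) * i₀ = p * (p ^ f * i₀) := by ring
    have hdvd : p ∣ p ^ (f + 1) * i₀ := ⟨p ^ f * i₀, hrw⟩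
    have h3 := (h₁ _ hpos2).1 hdvd
    rw [hrw, Nat.mul_div_cancel_left _ (by omega : 0 < p)] at h3
    rw [hrw, h3, ih, geom_sum_succ]
    ring

lemma Bdecomp (hq : 2 ≤ q) (h₂ : RecA A q t d β) :
    ∀ n, 1 ≤ n → ∃ e rr, 1 ≤ rr ∧ rr < q ∧ q ^ e ∣ n ∧
      A n = t ^ e * β rr + d * ∑ i ∈ Finset.range e, t ^ i := by
  intro n
  induction n using Nat.strong_induction_on with
  | _ n IH =>
    intro hn
    by_cases hdvd : q ∣ n
    · have hq' : q ≤ n := Nat.le_of_dvd (by omega) hdvd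
      have hlt : n / q < n := Nat.div_lt_self (by omega) (by omega)
      have hpos : 1 ≤ n / q := by
        rw [Nat.le_div_iff_mul_le (by omega : 0 < q)]; omega
      obtain ⟨e, rr, hr1, hr2, hdd, hA⟩ := IH _ hlt hpos
      refine ⟨e + 1, rr, hr1, hr2, ?_, ?_⟩
      · rw [show n = q * (n / q) from (Nat.mul_div_cancel' hdvd).symm, pow_succ']
        exact mul_dvd_mul_left q hdd
      · have h3 := (h₂ n hn).1 hdvd
        rw [h3, hA, geom_sum_succ]
        ring
    · refine ⟨0, n % q, ?_, Nat.mod_lt _ (by omega), one_dvd _, ?_⟩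
      · rcases Nat.eq_zero_or_pos (n % q) with h | h
        · exact absurd (Nat.dvd_of_mod_eq_zero h) hdvd
        · omega
      · have := (h₂ n hn).2 hdvd
        simp [this]

lemma lin_le {x y k : ℕ} (h : ∀ f : ℕ, f * x ≤ f * y + k) : x ≤ y := by
  by_contra hxy
  have h1 := h (k + 1)
  nlinarith

lemma bern (x : ℕ) : ∀ f, x ^ (f + 1) + (f + 1) * x ^ f ≤ (x + 1) ^ (f + 1) := by
  intro f
  induction f with
  | zero => simp [pow_succ]
  | succ f ih =>
    have h2 : (x ^ (f + 1) + (f + 1) * x ^ f) * (x + 1) ≤ (x + 1) ^ (f + 1) * (x + 1) :=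
      Nat.mul_le_mul_right _ ih
    rw [← pow_succ] at h2
    refine le_trans ?_ h2
    have hx : x ^ (f + 1) = x ^ f * x := pow_succ x f
    have hx2 : x ^ (f + 1 + 1) = x ^ (f + 1) * x := pow_succ x (f + 1)
    have key : (x ^ (f + 1) + (f + 1) * x ^ f) * (x + 1)
        = x ^ (f + 1 + 1) + (f + 1 + 1) * x ^ (f + 1) + (f + 1) * x ^ f := by
      rw [hx2, hx]; ring
    rw [key]
    exact Nat.le_add_right _ _

lemma exists_exp_gt (a b : ℕ) : ∃ m : ℕ, a * m + b < 2 ^ m := by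
  refine ⟨2 * (2 * a + b + 1), ?_⟩
  set g := 2 * a + b + 1 with hg
  have h1 : g < 2 ^ g := Nat.lt_two_pow_self (n := g)
  have h2 : g + 1 ≤ 2 ^ g := h1
  have h3 : a * (2 * g) + b ≤ g * g + g := by nlinarith
  have h4 : g * g + g < 2 ^ g * 2 ^ g := by nlinarith
  have h5 : 2 ^ g * 2 ^ g = 2 ^ (2 * g) := by rw [← pow_add]; ring_nf
  omega

lemma val_le {q e n : ℕ} (hq0 : q ≠ 0) (hn : n ≠ 0) (h : q ^ e ∣ n) (r : ℕ) :
    e * q.factorization r ≤ n.factorization r := by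
  have h2 := (Nat.factorization_le_iff_dvd (pow_ne_zero _ hq0) hn).mpr h
  have h3 := h2 r
  rwa [Nat.factorization_pow, Finsupp.smul_apply, smul_eq_mul] at h3

lemma val_le_mul {q e p f i₀ : ℕ} (hq0 : q ≠ 0) (hp0 : p ≠ 0) (hi0 : i₀ ≠ 0)
    (h : q ^ e ∣ p ^ f * i₀) (r : ℕ) :
    e * q.factorization r ≤ f * p.factorization r + i₀.factorization r := by
  have hne : p ^ f * i₀ ≠ 0 := by positivity
  have h3 := val_le hq0 hne h r
  rwa [Nat.factorization_mul (pow_ne_zero _ hp0) hi0, Finsupp.add_apply,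
    Nat.factorization_pow, Finsupp.smul_apply, smul_eq_mul] at h3


lemma step1 (hp : 2 ≤ p) (hs : 1 ≤ s) (h₁ : RecA A p s c α) {i₀ : ℕ}
    (hi₁ : 1 ≤ i₀) (hi₂ : i₀ < p) (f : ℕ) :
    (s - 1) * A (p ^ f * i₀) + c = s ^ f * ((s - 1) * α i₀ + c) := by
  rw [Bchain hp h₁ hi₁ hi₂ f]
  have hg := gmul hs f
  calc (s - 1) * (s ^ f * α i₀ + c * ∑ i ∈ Finset.range f, s ^ i) + c
      = s ^ f * ((s - 1) * α i₀) + c * ((s - 1) * ∑ i ∈ Finset.range f, s ^ i + 1) := by ring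
    _ = s ^ f * ((s - 1) * α i₀) + c * s ^ f := by rw [hg]
    _ = s ^ f * ((s - 1) * α i₀ + c) := by ring

lemma Bdecomp2 (hq : 2 ≤ q) (ht : 1 ≤ t) (h₂ : RecA A q t d β) {n : ℕ} (hn : 1 ≤ n) :
    ∃ e rr, 1 ≤ rr ∧ rr < q ∧ q ^ e ∣ n ∧
      A n = t ^ e * β rr + d * ∑ i ∈ Finset.range e, t ^ i ∧
      (t - 1) * A n + d = t ^ e * ((t - 1) * β rr + d) := by
  obtain ⟨e, rr, hr1, hr2, hdd, hA⟩ := Bdecomp hq h₂ n hn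
  refine ⟨e, rr, hr1, hr2, hdd, hA, ?_⟩
  have hg := gmul ht e
  rw [hA]
  calc (t - 1) * (t ^ e * β rr + d * ∑ i ∈ Finset.range e, t ^ i) + d
      = t ^ e * ((t - 1) * β rr) + d * ((t - 1) * ∑ i ∈ Finset.range e, t ^ i + 1) := by ring
    _ = t ^ e * ((t - 1) * β rr) + d * t ^ e := by rw [hg]
    _ = t ^ e * ((t - 1) * β rr + d) := by ring

lemma Dexp (hp : 2 ≤ p) (hq : 2 ≤ q) (hs2 : 2 ≤ s) (ht2 : 2 ≤ t)
    (h₁ : RecA A p s c α) (h₂ : RecA A q t d β)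
    {i₀ : ℕ} (hi₁ : 1 ≤ i₀) (hi₂ : i₀ < p) (hX : 1 ≤ (s - 1) * α i₀ + c)
    {Bmax : ℕ} (hB : ∀ r, r < q → β r ≤ Bmax) (r : ℕ) :
    s ^ q.factorization r ≤ t ^ p.factorization r := by
  by_contra hcon
  push_neg at hcon
  set V := q.factorization r with hV
  set P := p.factorization r with hP
  set D := i₀.factorization r with hD
  set K₀ := (t - 1) * Bmax + d with hK₀
  set K₁ := (s - 1) * K₀ + c with hK₁
  set C' := t ^ D * K₁ ^ V with hC'
  set x := t ^ P with hx
  have hx1 : 1 ≤ x := Nat.one_le_pow _ _ (by omega)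
  have key : ∀ f : ℕ, (x + 1) ^ f ≤ C' * x ^ f := by
    intro f
    have hn : 1 ≤ p ^ f * i₀ := Nat.one_le_iff_ne_zero.mpr (by positivity)
    have h1 := step1 hp (by omega) h₁ hi₁ hi₂ f
    have h1' : s ^ f ≤ (s - 1) * A (p ^ f * i₀) + c := by
      rw [h1]
      calc s ^ f = s ^ f * 1 := by ring
        _ ≤ s ^ f * ((s - 1) * α i₀ + c) := Nat.mul_le_mul_left _ hX
    obtain ⟨e, rr, hr1, hr2, hdd, -, h2⟩ := Bdecomp2 hq (by omega) h₂ hn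
    have hAle : A (p ^ f * i₀) ≤ t ^ e * K₀ := by
      have hb := hB rr hr2
      have ha1 : A (p ^ f * i₀) ≤ (t - 1) * A (p ^ f * i₀) + d := by
        have : 1 * A (p ^ f * i₀) ≤ (t - 1) * A (p ^ f * i₀) :=
          Nat.mul_le_mul_right _ (by omega)
        omega
      calc A (p ^ f * i₀) ≤ (t - 1) * A (p ^ f * i₀) + d := ha1
        _ = t ^ e * ((t - 1) * β rr + d) := h2
        _ ≤ t ^ e * K₀ := Nat.mul_le_mul_left _ (by
            have : (t - 1) * β rr ≤ (t - 1) * Bmax := Nat.mul_le_mul_left _ hb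
            omega)
    have h3 : s ^ f ≤ t ^ e * K₁ := by
      have hstep : (s - 1) * A (p ^ f * i₀) + c ≤ (s - 1) * (t ^ e * K₀) + c :=
        add_le_add (Nat.mul_le_mul_left _ hAle) le_rfl
      have hc' : c ≤ t ^ e * c := Nat.le_mul_of_pos_left _ (pow_pos (by omega) e)
      calc s ^ f ≤ (s - 1) * A (p ^ f * i₀) + c := h1'
        _ ≤ (s - 1) * (t ^ e * K₀) + c := hstep
        _ ≤ t ^ e * ((s - 1) * K₀) + t ^ e * c := by
            have : (s - 1) * (t ^ e * K₀) = t ^ e * ((s - 1) * K₀) := by ring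
            omega
        _ = t ^ e * K₁ := by rw [hK₁]; ring
    have hval : e * V ≤ f * P + D :=
      val_le_mul (by omega) (by omega) (by omega) hdd r
    have h4 : (s ^ f) ^ V ≤ (t ^ e * K₁) ^ V := Nat.pow_le_pow_left h3 V
    have h6 : t ^ (e * V) ≤ t ^ (f * P + D) := Nat.pow_le_pow_right (by omega) hval
    have h7 : (x + 1) ^ f ≤ (s ^ V) ^ f := Nat.pow_le_pow_left (by omega) f
    calc (x + 1) ^ f ≤ (s ^ V) ^ f := h7
      _ = (s ^ f) ^ V := by rw [← pow_mul, ← pow_mul, mul_comm]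
      _ ≤ (t ^ e * K₁) ^ V := h4
      _ = (t ^ e) ^ V * K₁ ^ V := mul_pow _ _ _
      _ = t ^ (e * V) * K₁ ^ V := by rw [← pow_mul]
      _ ≤ t ^ (f * P + D) * K₁ ^ V := Nat.mul_le_mul_right _ h6
      _ = C' * x ^ f := by
          rw [pow_add, hC', hx, ← pow_mul, mul_comm f P, pow_mul]
          ring
  have final : ∀ f : ℕ, f + 1 ≤ C' * x := by
    intro f
    have hb := bern x f
    have hk := key (f + 1)
    have h8 : (f + 1) * x ^ f ≤ C' * x ^ (f + 1) :=
      le_trans (le_trans (Nat.le_add_left _ _) hb) hk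
    have h9 : C' * x ^ (f + 1) = (C' * x) * x ^ f := by rw [pow_succ]; ring
    rw [h9] at h8
    exact Nat.le_of_mul_le_mul_right h8 (pow_pos (by omega) f)
  have := final (C' * x)
  omega

lemma Dlin (hp : 2 ≤ p) (hq : 2 ≤ q)
    (h₁ : RecA A p s c α) (h₂ : RecA A q t d β)
    (hs1 : s = 1) (ht1 : t = 1)
    {Bmax : ℕ} (hB : ∀ r, r < q → β r ≤ Bmax) (r : ℕ) :
    c * q.factorization r ≤ d * p.factorization r := by
  subst hs1 ht1
  set V := q.factorization r with hV
  set P := p.factorization r with hP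
  refine lin_le (k := Bmax * V) fun f => ?_
  have hn : 1 ≤ p ^ f * 1 := Nat.one_le_iff_ne_zero.mpr (by positivity)
  have hch0 := Bchain hp h₁ (le_refl 1) (by omega) f
  have hch : A (p ^ f * 1) = α 1 + c * f := by simpa using hch0
  obtain ⟨e, rr, hr1, hr2, hdd, hA0, -⟩ := Bdecomp2 hq (le_refl 1) h₂ hn
  have hA : A (p ^ f * 1) = β rr + d * e := by simpa using hA0
  have hcf : c * f ≤ Bmax + d * e := by
    have := hB rr hr2
    omega
  have hval : e * V ≤ f * P + (1 : ℕ).factorization r :=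
    val_le_mul (by omega) (by omega) (by omega) hdd r
  rw [Nat.factorization_one] at hval
  simp only [Finsupp.coe_zero, Pi.zero_apply, add_zero] at hval
  calc f * (c * V) = (c * f) * V := by ring
    _ ≤ (Bmax + d * e) * V := Nat.mul_le_mul_right _ hcf
    _ = Bmax * V + d * (e * V) := by ring
    _ ≤ Bmax * V + d * (f * P) := by
        have := Nat.mul_le_mul_left d hval
        omega
    _ = f * (d * P) + Bmax * V := by ring

lemma Mx (hp : 2 ≤ p) (hq : 2 ≤ q) (hs2 : 2 ≤ s) (ht1 : t = 1)
    (h₁ : RecA A p s c α) (h₂ : RecA A q t d β)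
    {i₀ : ℕ} (hi₁ : 1 ≤ i₀) (hi₂ : i₀ < p) (hX : 1 ≤ (s - 1) * α i₀ + c)
    {Bmax : ℕ} (hB : ∀ r, r < q → β r ≤ Bmax) : False := by
  subst ht1
  set a := (s - 1) * d * p with ha
  set b := (s - 1) * (Bmax + d * i₀) + c with hb
  have key : ∀ f : ℕ, 2 ^ f ≤ a * f + b := by
    intro f
    have hn : 1 ≤ p ^ f * i₀ := Nat.one_le_iff_ne_zero.mpr (by positivity)
    have h1 := step1 hp (by omega) h₁ hi₁ hi₂ f
    have h1' : s ^ f ≤ (s - 1) * A (p ^ f * i₀) + c := by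
      rw [h1]
      calc s ^ f = s ^ f * 1 := by ring
        _ ≤ s ^ f * ((s - 1) * α i₀ + c) := Nat.mul_le_mul_left _ hX
    obtain ⟨e, rr, hr1, hr2, hdd, hA0, -⟩ := Bdecomp2 hq (le_refl 1) h₂ hn
    have hA : A (p ^ f * i₀) = β rr + d * e := by simpa using hA0
    -- bound e
    have he : e ≤ p * f + i₀ := by
      have hd1 : q ^ e ≤ p ^ f * i₀ := Nat.le_of_dvd (by omega) hdd
      have hd2 : 2 ^ e ≤ q ^ e := Nat.pow_le_pow_left (by omega) e
      have hd3 : p ^ f ≤ 2 ^ (p * f) := by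
        calc p ^ f ≤ (2 ^ p) ^ f := Nat.pow_le_pow_left (Nat.lt_two_pow_self (n := p)).le f
          _ = 2 ^ (p * f) := by rw [← pow_mul]
      have hd4 : i₀ ≤ 2 ^ i₀ := (Nat.lt_two_pow_self (n := i₀)).le
      have hd5 : 2 ^ e ≤ 2 ^ (p * f + i₀) := by
        calc 2 ^ e ≤ p ^ f * i₀ := le_trans hd2 hd1
          _ ≤ 2 ^ (p * f) * 2 ^ i₀ := Nat.mul_le_mul hd3 hd4
          _ = 2 ^ (p * f + i₀) := by rw [← pow_add]
      exact (Nat.pow_le_pow_iff_right (by omega)).mp hd5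
    have h2f : 2 ^ f ≤ s ^ f := Nat.pow_le_pow_left (by omega) f
    have hAn : A (p ^ f * i₀) ≤ Bmax + d * e := by
      have := hB rr hr2
      omega
    calc 2 ^ f ≤ s ^ f := h2f
      _ ≤ (s - 1) * A (p ^ f * i₀) + c := h1'
      _ ≤ (s - 1) * (Bmax + d * e) + c := by
          have := Nat.mul_le_mul_left (s - 1) hAn
          omega
      _ ≤ (s - 1) * (Bmax + d * (p * f + i₀)) + c := by
          have h6 : d * e ≤ d * (p * f + i₀) := Nat.mul_le_mul_left d he
          have := Nat.mul_le_mul_left (s - 1) (show Bmax + d * e ≤ Bmax + d * (p * f + i₀) by omega)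
          omega
      _ = a * f + b := by rw [ha, hb]; ring
  obtain ⟨m, hm⟩ := exists_exp_gt a b
  have := key m
  omega

lemma UC (hp : 2 ≤ p) (hq : 2 ≤ q) (hs : 1 ≤ s)
    (h₁ : RecA A p s c α) (h₂ : RecA A q t d β)
    (bad₁ : 2 ≤ s ∨ 0 < c)
    (pos₁ : 0 < c ∨ ∃ r, 1 ≤ r ∧ r < p ∧ 0 < α r)
    (ht1 : t = 1) (hd0 : d = 0)
    {Bmax : ℕ} (hB : ∀ r, r < q → β r ≤ Bmax) : False := by
  subst ht1; subst hd0
  have bound : ∀ n, 1 ≤ n → A n ≤ Bmax := by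
    intro n hn
    obtain ⟨e, rr, hr1, hr2, -, hA0⟩ := Bdecomp hq h₂ n hn
    have hA : A n = β rr := by simpa using hA0
    rw [hA]
    exact hB rr hr2
  by_cases hc : 0 < c
  · set f := Bmax + 1 with hf
    have hch := Bchain hp h₁ (le_refl 1) (by omega) f
    have hsumge : f ≤ ∑ i ∈ Finset.range f, s ^ i := by
      calc f = ∑ _i ∈ Finset.range f, 1 := by simp
        _ ≤ ∑ i ∈ Finset.range f, s ^ i :=
          Finset.sum_le_sum fun i _ => Nat.one_le_pow _ _ (by omega)
    have hge : Bmax + 1 ≤ A (p ^ f * 1) := by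
      rw [hch]
      have : 1 * f ≤ c * ∑ i ∈ Finset.range f, s ^ i :=
        Nat.mul_le_mul hc hsumge
      omega
    have := bound (p ^ f * 1) (Nat.one_le_iff_ne_zero.mpr (by positivity))
    omega
  · have hs2 : 2 ≤ s := by rcases bad₁ with h | h; exacts [h, absurd h hc]
    rcases pos₁ with h | ⟨r, hr1, hr2, hα⟩
    · exact hc h
    set f := Bmax with hf
    have hch := Bchain hp h₁ hr1 hr2 f
    have hge : Bmax < A (p ^ f * r) := by
      rw [hch]
      have h2f : 2 ^ f ≤ s ^ f := Nat.pow_le_pow_left (by omega) f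
      have hlt : f < 2 ^ f := Nat.lt_two_pow_self (n := f)
      have : s ^ f * 1 ≤ s ^ f * α r := Nat.mul_le_mul_left _ hα
      omega
    have := bound (p ^ f * r) (Nat.one_le_iff_ne_zero.mpr (by positivity))
    omega


lemma mkX {p' s' c' : ℕ} {α' : ℕ → ℕ} (hp' : 2 ≤ p') (hs' : 1 ≤ s')
    (bad : 2 ≤ s' ∨ 0 < c')
    (pos : 0 < c' ∨ ∃ r, 1 ≤ r ∧ r < p' ∧ 0 < α' r) :
    ∃ i₀, 1 ≤ i₀ ∧ i₀ < p' ∧ 1 ≤ (s' - 1) * α' i₀ + c' := by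
  by_cases hc' : 0 < c'
  · exact ⟨1, le_refl 1, by omega, by omega⟩
  · have hs2 : 2 ≤ s' := by rcases bad with h | h; exacts [h, absurd h hc']
    rcases pos with h | ⟨r, hr1, hr2, hα⟩
    · exact absurd h hc'
    · refine ⟨r, hr1, hr2, ?_⟩
      have : 1 * 1 ≤ (s' - 1) * α' r := Nat.mul_le_mul (by omega) hα
      omega

lemma pow_factorization_eq_imp {a b x y : ℕ} (ha : 0 < a) (hb : 0 < b)
    (h : ∀ r, x * a.factorization r = y * b.factorization r) :
    a ^ x = b ^ y := by
  apply Nat.factorization_inj (by simp only [Set.mem_setOf_eq]; exact (pow_pos ha x).ne')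
    (by simp only [Set.mem_setOf_eq]; exact (pow_pos hb y).ne')
  rw [Nat.factorization_pow, Nat.factorization_pow]
  ext r
  simp only [Finsupp.smul_apply, smul_eq_mul]
  exact h r

lemma master (hp : 2 ≤ p) (hq : 2 ≤ q) (hs : 1 ≤ s) (ht : 1 ≤ t)
    (h₁ : RecA A p s c α) (h₂ : RecA A q t d β)
    (hind : ∀ i j : ℕ, p ^ i = q ^ j → i = 0 ∧ j = 0)
    (pos₁ : 0 < c ∨ ∃ r, 1 ≤ r ∧ r < p ∧ 0 < α r) :
    s = 1 ∧ c = 0 ∧ t = 1 ∧ d = 0 := by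
  have hind' : ∀ i j : ℕ, q ^ i = p ^ j → i = 0 ∧ j = 0 := by
    intro i j h
    obtain ⟨h1, h2⟩ := hind j i h.symm
    exact ⟨h2, h1⟩
  set Bmax := (Finset.range q).sup β with hBmax
  have hB : ∀ r, r < q → β r ≤ Bmax := fun r hr =>
    Finset.le_sup (Finset.mem_range.mpr hr)
  set Amax := (Finset.range p).sup α with hAmax
  have hA' : ∀ r, r < p → α r ≤ Amax := fun r hr =>
    Finset.le_sup (Finset.mem_range.mpr hr)
  have hpos : ∃ i, 1 ≤ i ∧ 0 < A i := by
    rcases pos₁ with hc | ⟨r, hr1, hr2, hα⟩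
    · refine ⟨p, by omega, ?_⟩
      have := (h₁ p (by omega)).1 (dvd_refl p)
      omega
    · refine ⟨r, hr1, ?_⟩
      have hnd : ¬ p ∣ r := fun hdvd => by
        have := Nat.le_of_dvd (by omega) hdvd; omega
      have := (h₁ r hr1).2 hnd
      rw [Nat.mod_eq_of_lt hr2] at this
      omega
  have pos₂ : 0 < d ∨ ∃ r, 1 ≤ r ∧ r < q ∧ 0 < β r := by
    obtain ⟨i, hi, hAi⟩ := hpos
    obtain ⟨e, rr, hr1, hr2, -, hAn⟩ := Bdecomp hq h₂ i hi
    by_cases hd : 0 < d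
    · exact Or.inl hd
    · have hd0 : d = 0 := by omega
      subst hd0
      right
      refine ⟨rr, hr1, hr2, ?_⟩
      simp only [zero_mul, add_zero] at hAn
      rw [hAn] at hAi
      by_contra h0
      have : β rr = 0 := by omega
      rw [this, mul_zero] at hAi
      omega
  have good₁ : s = 1 ∧ c = 0 := by
    by_contra hbad
    have bad₁ : 2 ≤ s ∨ 0 < c := by omega
    by_cases hbad₂ : 2 ≤ t ∨ 0 < d
    · by_cases hs2 : 2 ≤ s
      · by_cases ht2 : 2 ≤ t
        · -- exp-exp
          obtain ⟨i₀, hi₁, hi₂, hX⟩ := mkX hp hs bad₁ pos₁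
          obtain ⟨j₀, hj₁, hj₂, hY⟩ := mkX hq ht hbad₂ pos₂
          have heq : ∀ r, s ^ q.factorization r = t ^ p.factorization r := fun r =>
            le_antisymm (Dexp hp hq hs2 ht2 h₁ h₂ hi₁ hi₂ hX hB r)
              (Dexp hq hp ht2 hs2 h₂ h₁ hj₁ hj₂ hY hA' r)
          set r₀ := q.minFac with hr₀
          have hr₀p : r₀.Prime := Nat.minFac_prime (by omega)
          have hV₀ : 0 < q.factorization r₀ :=
            hr₀p.factorization_pos_of_dvd (by omega) (Nat.minFac_dvd q)
          set V₀ := q.factorization r₀ with hV₀d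
          set P₀ := p.factorization r₀ with hP₀d
          have hs0 : s ^ V₀ = t ^ P₀ := heq r₀
          have hsV : 2 ≤ s ^ V₀ := by
            calc 2 = 2 ^ 1 := by norm_num
              _ ≤ 2 ^ V₀ := Nat.pow_le_pow_right (by omega) hV₀
              _ ≤ s ^ V₀ := Nat.pow_le_pow_left hs2 V₀
          have hP₀ : 0 < P₀ := by
            by_contra h0
            have : P₀ = 0 := by omega
            rw [this, pow_zero] at hs0
            omega
          have hPV : ∀ r, P₀ * q.factorization r = p.factorization r * V₀ := by
            intro r
            have e1 : t ^ (p.factorization r * V₀) = t ^ (P₀ * q.factorization r) := by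
              calc t ^ (p.factorization r * V₀) = (t ^ p.factorization r) ^ V₀ := pow_mul t _ _
                _ = (s ^ q.factorization r) ^ V₀ := by rw [heq r]
                _ = (s ^ V₀) ^ q.factorization r := by
                    rw [← pow_mul, ← pow_mul, mul_comm]
                _ = (t ^ P₀) ^ q.factorization r := by rw [hs0]
                _ = t ^ (P₀ * q.factorization r) := (pow_mul t _ _).symm
            exact (Nat.pow_right_injective ht2 e1).symm
          have hpq : p ^ V₀ = q ^ P₀ := by
            apply pow_factorization_eq_imp (by omega) (by omega)
            intro r
            rw [mul_comm V₀ (p.factorization r), hPV r]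
          obtain ⟨h1, -⟩ := hind V₀ P₀ hpq
          omega
        · have ht1 : t = 1 := by omega
          have hd : 0 < d := by rcases hbad₂ with h | h; exacts [absurd h ht2, h]
          obtain ⟨i₀, hi₁, hi₂, hX⟩ := mkX hp hs bad₁ pos₁
          exact Mx hp hq hs2 ht1 h₁ h₂ hi₁ hi₂ hX hB
      · have hs1 : s = 1 := by omega
        have hc : 0 < c := by rcases bad₁ with h | h; exacts [absurd h hs2, h]
        by_cases ht2 : 2 ≤ t
        · obtain ⟨j₀, hj₁, hj₂, hY⟩ := mkX hq ht hbad₂ pos₂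
          exact Mx hq hp ht2 hs1 h₂ h₁ hj₁ hj₂ hY hA'
        · have ht1 : t = 1 := by omega
          have hd : 0 < d := by rcases hbad₂ with h | h; exacts [absurd h ht2, h]
          have heq : ∀ r, c * q.factorization r = d * p.factorization r := fun r =>
            le_antisymm (Dlin hp hq h₁ h₂ hs1 ht1 hB r)
              (Dlin hq hp h₂ h₁ ht1 hs1 hA' r)
          have hpq : p ^ d = q ^ c := by
            apply pow_factorization_eq_imp (by omega) (by omega)
            intro r
            exact (heq r).symm
          obtain ⟨h1, -⟩ := hind d c hpq
          omega
    · push_neg at hbad₂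
      have ht1 : t = 1 := by omega
      have hd0 : d = 0 := by omega
      exact UC hp hq hs h₁ h₂ bad₁ pos₁ ht1 hd0 hB
  obtain ⟨hs1, hc0⟩ := good₁
  have good₂ : t = 1 ∧ d = 0 := by
    by_contra hbad
    have bad₂ : 2 ≤ t ∨ 0 < d := by omega
    exact UC hq hp ht h₂ h₁ bad₂ pos₂ hs1 hc0 hA'
  exact ⟨hs1, hc0, good₂.1, good₂.2⟩

end Arith

lemma flatMap_single (m : ℕ) :
    (List.range m).flatMap (fun _ => ([true] : Word)) = List.replicate m true := by
  induction m with
  | zero => simp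
  | succ n ih =>
    rw [List.range_succ, List.flatMap_append, ih]
    simp [List.replicate_succ']

end St10

theorem stmt10' (s t : ℕ) (hs : 1 ≤ s) (ht : 1 ≤ t)
    (p q : ℕ) (hp : 2 ≤ p) (hq : 2 ≤ q)
    (γ₁ γ₂ δ₁ δ₂ : ℕ) (α β : ℕ → ℕ)
    (g₁ g₂ : Bool → Word)
    (h₁a : g₁ false = rep s)
    (h₁b : g₁ true = rep γ₁ ++ blockWord p α ++ rep γ₂)
    (h₂a : g₂ false = rep t)
    (h₂b : g₂ true = rep δ₁ ++ blockWord q β ++ rep δ₂)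
    (hind : ∀ i j : ℕ, p ^ i = q ^ j → i = 0 ∧ j = 0)
    (hnb : ¬ ∃ k : ℕ, g₁ true = List.replicate k true)
    (homega : ∃ w : ℕ → Bool, St10.IsOmega' g₁ w ∧ St10.IsOmega' g₂ w) :
    s = 1 ∧ t = 1 ∧ γ₁ = 0 ∧ γ₂ = 0 ∧ δ₁ = 0 ∧ δ₂ = 0 := by
  obtain ⟨w, hw₁, hw₂⟩ := homega
  set F := St10.Fg p s (γ₁ + γ₂) α with hF
  set G := St10.Fg q t (δ₁ + δ₂) β with hG
  have hagF : ∀ i k (hk : k < (St10.TW F i).length), (St10.TW F i).get ⟨k, hk⟩ = w k :=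
    fun i k hk => St10.agree_w hp h₁a h₁b hw₁ i k hk
  have hagG : ∀ i k (hk : k < (St10.TW G i).length), (St10.TW G i).get ⟨k, hk⟩ = w k :=
    fun i k hk => St10.agree_w hq h₂a h₂b hw₂ i k hk
  have hFG : ∀ i, 1 ≤ i → F i = G i := by
    intro i hi
    obtain ⟨j, rfl⟩ : ∃ j, i = j + 1 := ⟨i - 1, by omega⟩
    exact St10.Feq hagF hagG j
  have hrec₁ : St10.RecA F p s (γ₁ + γ₂) α := by
    intro i hi
    constructor
    · intro hdvd
      exact St10.Fg_dvd hp hdvd (by omega)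
    · intro hnd
      exact St10.Fg_not_dvd hnd
  have hrec₂ : St10.RecA F q t (δ₁ + δ₂) β := by
    intro i hi
    have hGi := hFG i hi
    constructor
    · intro hdvd
      have hqi : q ≤ i := Nat.le_of_dvd (by omega) hdvd
      have hdiv : 1 ≤ i / q := by
        rw [Nat.le_div_iff_mul_le (by omega : 0 < q)]; omega
      rw [hGi, hG, St10.Fg_dvd hq hdvd (by omega), ← hG, ← hFG _ hdiv]
    · intro hnd
      rw [hGi, hG, St10.Fg_not_dvd hnd]
  have pos₁ : 0 < γ₁ + γ₂ ∨ ∃ r, 1 ≤ r ∧ r < p ∧ 0 < α r := by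
    by_contra h0
    push_neg at h0
    obtain ⟨h0c, h0α⟩ := h0
    apply hnb
    refine ⟨p, ?_⟩
    have hγ₁ : γ₁ = 0 := by omega
    have hγ₂ : γ₂ = 0 := by omega
    have hbody : St10.body α (p - 1) = List.replicate (p - 1) true := by
      rw [St10.body]
      rw [St10.flatMap_congr' (g := fun _ => ([true] : Word)) ?_]
      · exact St10.flatMap_single (p - 1)
      · intro j hj
        have hjm : j < p - 1 := List.mem_range.mp hj
        have : α (j + 1) = 0 := by
          have := h0α (j + 1) (by omega)
          omega
        simp [this, rep]
    rw [h₁b, hγ₁, hγ₂, St10.blockWord_eq, hbody]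
    simp [rep]
    rw [← List.replicate_succ]
    congr 1
    omega
  have hm := St10.master hp hq hs ht hrec₁ hrec₂ hind pos₁
  exact ⟨hm.1, hm.2.2.1, by omega, by omega, by omega, by omega⟩


/-- if `p`, `q` are multiplicatively independent, `g₁(b) ∉ b*` and
`ω(g₁) = ω(g₂)`, then `s = t = 1` and `γ₁ = γ₂ = δ₁ = δ₂ = 0`. -/
theorem stmt10 (s t : ℕ) (hs : 1 ≤ s) (ht : 1 ≤ t)
    (p q : ℕ) (hp : 2 ≤ p) (hq : 2 ≤ q)
    (γ₁ γ₂ δ₁ δ₂ : ℕ) (α β : ℕ → ℕ)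
    (g₁ g₂ : Bool → Word)
    (h₁a : g₁ false = rep s)
    (h₁b : g₁ true = rep γ₁ ++ blockWord p α ++ rep γ₂)
    (h₂a : g₂ false = rep t)
    (h₂b : g₂ true = rep δ₁ ++ blockWord q β ++ rep δ₂)
    (hind : ∀ i j : ℕ, p ^ i = q ^ j → i = 0 ∧ j = 0)
    (hnb : ¬ ∃ k : ℕ, g₁ true = List.replicate k true)
    (homega : ∃ w : ℕ → Bool, IsOmega g₁ w ∧ IsOmega g₂ w) :
    s = 1 ∧ t = 1 ∧ γ₁ = 0 ∧ γ₂ = 0 ∧ δ₁ = 0 ∧ δ₂ = 0 :=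
  stmt10' s t hs ht p q hp hq γ₁ γ₂ δ₁ δ₂ α β g₁ g₂ h₁a h₁b h₂a h₂b hind hnb homega
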